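/- arXiv:2205.15502 — 4 statements merged into one kernel-verified Lean document; each statement's English description precedes it below -/
import Mathlib

section
/- For a directed Eulerian multigraph $D$, the number of spanning arborescences $\tau_u(D)$ rooted at $u$ is independent of the choice of root vertex $u$. -/
open Finset

/-! Directed multigraphs with labelled arcs: arc type `A`, maps `src`, `tgt`. -/
namespace Digraph0

variable {V : Type*} {A : Type*} [Fintype A]

/-- Outdegree of a vertex. -/
noncomputable def outdeg (src : A → V) (v : V) : ℕ := Nat.card {a : A // src a = v}

/-- Indegree of a vertex. -/
noncomputable def indeg (tgt : A → V) (v : V) : ℕ := Nat.card {a : A // tgt a = v}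

/-- The non-isolated vertices. -/
def supp (src tgt : A → V) : Set V := {v | ∃ a : A, src a = v ∨ tgt a = v}

/-- Indegree equals outdegree at every vertex. -/
def Balanced (src tgt : A → V) : Prop := ∀ v : V, outdeg src v = indeg tgt v

/-- Adjacency, ignoring directions. -/
def Adj (src tgt : A → V) (x y : V) : Prop :=
  ∃ a : A, (src a = x ∧ tgt a = y) ∨ (src a = y ∧ tgt a = x)

/-- Connectivity (ignoring directions) on the non-isolated vertices. -/
def Conn (src tgt : A → V) : Prop :=
  ∀ x ∈ supp src tgt, ∀ y ∈ supp src tgt, Relation.ReflTransGen (Adj src tgt) x y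

/-- Eulerian directed multigraph: balanced and connected. -/
def IsEulerian (src tgt : A → V) : Prop := Balanced src tgt ∧ Conn src tgt

/-- One step along an arc of `T`. -/
def Step (src tgt : A → V) (T : Finset A) (x y : V) : Prop :=
  ∃ a ∈ T, src a = x ∧ tgt a = y

/-- `T` is a spanning arborescence oriented toward the root `u`:
no arc leaves `u`, every other non-isolated vertex has exactly one outgoing arc in `T`,
and every non-isolated vertex has a directed path in `T` to `u`. -/
def IsArborescence (src tgt : A → V) (u : V) (T : Finset A) : Prop :=
  (∀ a ∈ T, src a ≠ u) ∧
  (∀ v ∈ supp src tgt, v ≠ u → ∃! a : A, a ∈ T ∧ src a = v) ∧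
  (∀ v ∈ supp src tgt, Relation.ReflTransGen (Step src tgt T) v u)

/-- The number of spanning arborescences with root `u`. -/
noncomputable def tau (src tgt : A → V) (u : V) : ℕ :=
  Nat.card {T : Finset A // IsArborescence src tgt u T}

/-- An Euler tour, as a list of arcs traversing every arc exactly once,
consecutive arcs being consistent, and closing up. -/
def IsEulerTour (src tgt : A → V) (l : List A) : Prop :=
  l.Nodup ∧ (∀ a : A, a ∈ l) ∧ l.Chain' (fun a b => tgt a = src b) ∧
  ∀ h : l ≠ [], tgt (l.getLast h) = src (l.head h)

end Digraph0

namespace Digraph0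

open Relation
open scoped Classical

variable {V : Type*} {A : Type*} [Fintype A] {src tgt : A → V}

lemma src_mem_supp (a : A) : src a ∈ supp src tgt := ⟨a, Or.inl rfl⟩
lemma tgt_mem_supp (a : A) : tgt a ∈ supp src tgt := ⟨a, Or.inr rfl⟩

/-- Every vertex of the support has a unique outgoing arc in `F`. -/
def OneOut (src tgt : A → V) (F : Finset A) : Prop :=
  ∀ v ∈ supp src tgt, ∃! a : A, a ∈ F ∧ src a = v

/-- The successor function of a functional graph. -/
noncomputable def nxt (src tgt : A → V) (F : Finset A) (v : V) : V :=
  if h : ∃ a, a ∈ F ∧ src a = v then tgt h.choose else v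

lemma nxt_eq_of_step {F : Finset A} (hOO : OneOut src tgt F) {x y : V}
    (h : Step src tgt F x y) : nxt src tgt F x = y := by
  obtain ⟨e, heF, hex, hey⟩ := h
  have hx : ∃ a, a ∈ F ∧ src a = x := ⟨e, heF, hex⟩
  rw [nxt, dif_pos hx]
  have := (hOO x ⟨e, Or.inl hex⟩).unique hx.choose_spec ⟨heF, hex⟩
  rw [this, hey]

lemma step_nxt {F : Finset A} (hOO : OneOut src tgt F) {v : V}
    (hv : v ∈ supp src tgt) : Step src tgt F v (nxt src tgt F v) := by
  obtain ⟨e, ⟨heF, hev⟩, -⟩ := hOO v hv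
  have hx : ∃ a, a ∈ F ∧ src a = v := ⟨e, heF, hev⟩
  rw [nxt, dif_pos hx]
  exact ⟨hx.choose, hx.choose_spec.1, hx.choose_spec.2, rfl⟩

lemma nxt_mem_supp {F : Finset A} (hOO : OneOut src tgt F) {v : V}
    (hv : v ∈ supp src tgt) : nxt src tgt F v ∈ supp src tgt := by
  obtain ⟨e, -, -, hey⟩ := step_nxt hOO hv
  rw [← hey]; exact tgt_mem_supp e

lemma iterate_mem_supp {F : Finset A} (hOO : OneOut src tgt F) {v : V}
    (hv : v ∈ supp src tgt) (n : ℕ) : (nxt src tgt F)^[n] v ∈ supp src tgt := by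
  induction n with
  | zero => exact hv
  | succ n ih => rw [Function.iterate_succ_apply']; exact nxt_mem_supp hOO ih

lemma reach_iterate {F : Finset A} (hOO : OneOut src tgt F) {v w : V}
    (h : ReflTransGen (Step src tgt F) v w) : ∃ n, (nxt src tgt F)^[n] v = w := by
  induction h with
  | refl => exact ⟨0, rfl⟩
  | tail _ hstep ih =>
    obtain ⟨n, hn⟩ := ih
    exact ⟨n + 1, by rw [Function.iterate_succ_apply', hn, nxt_eq_of_step hOO hstep]⟩

lemma iterate_reach {F : Finset A} (hOO : OneOut src tgt F) {v : V}
    (hv : v ∈ supp src tgt) (n : ℕ) :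
    ReflTransGen (Step src tgt F) v ((nxt src tgt F)^[n] v) := by
  induction n with
  | zero => exact .refl
  | succ n ih =>
    rw [Function.iterate_succ_apply']
    exact ih.tail (step_nxt hOO (iterate_mem_supp hOO hv n))

lemma step_mono {T F : Finset A} (hTF : T ⊆ F) {x y : V} (h : Step src tgt T x y) :
    Step src tgt F x y := by
  obtain ⟨e, heT, h1, h2⟩ := h; exact ⟨e, hTF heT, h1, h2⟩

/-- Truncation: any path to `u` yields a path avoiding departures from `r`,
either all the way to `u` or stopped at `r`. -/
lemma reflTransGen_avoid {R : V → V → Prop} {v u : V} (r : V) (h : ReflTransGen R v u) :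
    ReflTransGen (fun x y => R x y ∧ x ≠ r) v u ∨
      ReflTransGen (fun x y => R x y ∧ x ≠ r) v r := by
  induction h using ReflTransGen.head_induction_on with
  | refl => exact Or.inl .refl
  | head hstep _ ih =>
    rename_i x c _
    by_cases hx : x = r
    · exact Or.inr (hx ▸ .refl)
    · rcases ih with h' | h'
      · exact Or.inl (h'.head ⟨hstep, hx⟩)
      · exact Or.inr (h'.head ⟨hstep, hx⟩)

lemma mod_of_dvd_succ {p m : ℕ} (hp : 0 < p) (h : p ∣ m + 1) : m % p = p - 1 := by
  have h0 : (m + 1) % p = 0 := Nat.mod_eq_zero_of_dvd h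
  have h1 : (m % p + 1) % p = 0 := by rw [Nat.mod_add_mod]; exact h0
  have h2 : p ∣ m % p + 1 := Nat.dvd_of_mod_eq_zero h1
  have h3 : p ≤ m % p + 1 := Nat.le_of_dvd (Nat.succ_pos _) h2
  have h4 : m % p < p := Nat.mod_lt _ hp
  omega

/-- If `T` is an arborescence toward `src a`, then `insert a T` is a functional graph. -/
lemma oneOut_insert {a : A} {T : Finset A} (hT : IsArborescence src tgt (src a) T) :
    OneOut src tgt (insert a T) := by
  intro v hv
  by_cases hva : v = src a
  · subst hva
    refine ⟨a, ⟨mem_insert_self a T, rfl⟩, ?_⟩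
    rintro e ⟨heF, hes⟩
    rcases mem_insert.mp heF with rfl | heT
    · rfl
    · exact absurd hes (hT.1 e heT)
  · obtain ⟨e, ⟨heT, hes⟩, huniq⟩ := hT.2.1 v hv hva
    refine ⟨e, ⟨mem_insert_of_mem heT, hes⟩, ?_⟩
    rintro e' ⟨he'F, he's⟩
    rcases mem_insert.mp he'F with rfl | he'T
    · exact absurd he's.symm hva
    · exact huniq e' ⟨he'T, he's⟩

lemma root_arc_not_mem {r : V} {T : Finset A} (hT : IsArborescence src tgt r T)
    {a : A} (ha : src a = r) : a ∉ T := fun h => hT.1 a h ha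

/-- Forward well-definedness of the cycle-rotation map. -/
lemma g_spec {u : V} {a : A} {T : Finset A} (ha : tgt a = u)
    (hT : IsArborescence src tgt (src a) T) {b : A} (hbF : b ∈ insert a T)
    (hbs : src b = u) : IsArborescence src tgt u ((insert a T).erase b) := by
  have hOO : OneOut src tgt (insert a T) := oneOut_insert hT
  have hu : u ∈ supp src tgt := ha ▸ tgt_mem_supp a
  refine ⟨?_, ?_, ?_⟩
  · intro e he hes
    have : e = b := (hOO u hu).unique ⟨(mem_erase.mp he).2, hes⟩ ⟨hbF, hbs⟩
    exact (mem_erase.mp he).1 this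
  · intro v hv hvu
    obtain ⟨e, ⟨heF, hes⟩, huniq⟩ := hOO v hv
    have heb : e ≠ b := fun h => hvu (by rw [← hes, h, hbs])
    refine ⟨e, ⟨mem_erase.mpr ⟨heb, heF⟩, hes⟩, ?_⟩
    rintro e' ⟨he', he's⟩
    exact huniq e' ⟨(mem_erase.mp he').2, he's⟩
  · intro v hv
    have hmono : ∀ x y : V, (Step src tgt T x y ∧ x ≠ u) →
        Step src tgt ((insert a T).erase b) x y := by
      rintro x y ⟨⟨e, heT, hes, het⟩, hxu⟩
      have heb : e ≠ b := fun h => hxu (by rw [← hes, h, hbs])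
      exact ⟨e, mem_erase.mpr ⟨heb, mem_insert_of_mem heT⟩, hes, het⟩
    have hpath := hT.2.2 v hv
    rcases reflTransGen_avoid u hpath with h' | h'
    · -- path to `src a` avoiding `u`; append the arc `a`
      have h'' : ReflTransGen (Step src tgt ((insert a T).erase b)) v (src a) :=
        ReflTransGen.mono (fun x y hxy => hmono x y hxy) _ _ h'
      by_cases hau : src a = u
      · exact hau ▸ h''
      · have hab : a ≠ b := fun h => hau (h ▸ hbs)
        exact h''.tail ⟨a, mem_erase.mpr ⟨hab, mem_insert_self a T⟩, rfl, ha⟩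
    · exact ReflTransGen.mono (fun x y hxy => hmono x y hxy) _ _ h'

/-- The predecessor of `u` on its cycle is unique. -/
lemma pred_unique {F : Finset A} (hOO : OneOut src tgt F) {u r₁ r₂ : V} {e₁ e₂ : A}
    (h1 : ReflTransGen (Step src tgt F) u r₁) (h2 : ReflTransGen (Step src tgt F) u r₂)
    (he1 : e₁ ∈ F) (hs1 : src e₁ = r₁) (ht1 : tgt e₁ = u)
    (he2 : e₂ ∈ F) (hs2 : src e₂ = r₂) (ht2 : tgt e₂ = u) : r₁ = r₂ := by
  obtain ⟨m, hm⟩ := reach_iterate hOO h1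
  obtain ⟨n, hn⟩ := reach_iterate hOO h2
  set f := nxt src tgt F with hf
  have hfr1 : f r₁ = u := nxt_eq_of_step hOO ⟨e₁, he1, hs1, ht1⟩
  have hfr2 : f r₂ = u := nxt_eq_of_step hOO ⟨e₂, he2, hs2, ht2⟩
  have hp1 : Function.IsPeriodicPt f (m + 1) u := by
    show f^[m+1] u = u
    rw [Function.iterate_succ_apply', hm, hfr1]
  have hp2 : Function.IsPeriodicPt f (n + 1) u := by
    show f^[n+1] u = u
    rw [Function.iterate_succ_apply', hn, hfr2]
  set p := Function.minimalPeriod f u with hpdef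
  have hppos : 0 < p :=
    Function.minimalPeriod_pos_of_mem_periodicPts ⟨m + 1, Nat.succ_pos m, hp1⟩
  have hd1 : p ∣ m + 1 := hp1.minimalPeriod_dvd
  have hd2 : p ∣ n + 1 := hp2.minimalPeriod_dvd
  calc r₁ = f^[m] u := hm.symm
    _ = f^[m % p] u := (Function.iterate_mod_minimalPeriod_eq).symm
    _ = f^[n % p] u := by rw [mod_of_dvd_succ hppos hd1, mod_of_dvd_succ hppos hd2]
    _ = f^[n] u := Function.iterate_mod_minimalPeriod_eq
    _ = r₂ := hn

/-- The chosen outgoing arc of `u` in `insert a T`. -/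
noncomputable def gchoice (src tgt : A → V) (u : V)
    (p : {q : A × Finset A // tgt q.1 = u ∧ IsArborescence src tgt (src q.1) q.2}) : A :=
  (((oneOut_insert p.2.2) u (by rw [← p.2.1]; exact tgt_mem_supp p.1.1)).exists).choose

lemma gchoice_spec (u : V)
    (p : {q : A × Finset A // tgt q.1 = u ∧ IsArborescence src tgt (src q.1) q.2}) :
    gchoice src tgt u p ∈ insert p.1.1 p.1.2 ∧ src (gchoice src tgt u p) = u := by
  unfold gchoice
  exact Exists.choose_spec
    (((oneOut_insert p.2.2) u (by rw [← p.2.1]; exact tgt_mem_supp p.1.1)).exists)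

/-- The cycle-rotation map. -/
noncomputable def gfun (src tgt : A → V) (u : V)
    (p : {q : A × Finset A // tgt q.1 = u ∧ IsArborescence src tgt (src q.1) q.2}) :
    {q : A × Finset A // src q.1 = u ∧ IsArborescence src tgt u q.2} :=
  ⟨(gchoice src tgt u p, (insert p.1.1 p.1.2).erase (gchoice src tgt u p)),
    (gchoice_spec u p).2,
    g_spec p.2.1 p.2.2 (gchoice_spec u p).1 (gchoice_spec u p).2⟩

lemma gfun_injective (u : V) : Function.Injective (gfun src tgt u) := by
  rintro ⟨⟨a₁, T₁⟩, ha₁, hT₁⟩ ⟨⟨a₂, T₂⟩, ha₂, hT₂⟩ heq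
  set p₁ : {q : A × Finset A // tgt q.1 = u ∧ IsArborescence src tgt (src q.1) q.2} :=
    ⟨(a₁, T₁), ha₁, hT₁⟩ with hp₁
  set p₂ : {q : A × Finset A // tgt q.1 = u ∧ IsArborescence src tgt (src q.1) q.2} :=
    ⟨(a₂, T₂), ha₂, hT₂⟩ with hp₂
  have hb : gchoice src tgt u p₁ = gchoice src tgt u p₂ :=
    congrArg (fun q => q.1.1) heq
  have hT' : (insert a₁ T₁).erase (gchoice src tgt u p₁)
      = (insert a₂ T₂).erase (gchoice src tgt u p₂) :=
    congrArg (fun q => q.1.2) heq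
  set b := gchoice src tgt u p₁ with hbdef
  -- the two functional graphs coincide
  have hF : insert a₁ T₁ = insert a₂ T₂ := by
    have h1 : insert b ((insert a₁ T₁).erase b) = insert a₁ T₁ :=
      insert_erase (gchoice_spec u p₁).1
    have h2 : insert b ((insert a₂ T₂).erase b) = insert a₂ T₂ := by
      rw [hb]; exact insert_erase (gchoice_spec u p₂).1
    rw [← h1, ← h2, hT', hb]
  have hOO : OneOut src tgt (insert a₁ T₁) := oneOut_insert hT₁
  have hu : u ∈ supp src tgt := ha₁ ▸ tgt_mem_supp a₁
  -- roots coincide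
  have hr : src a₁ = src a₂ := by
    refine pred_unique hOO
      (ReflTransGen.mono (fun x y h => step_mono (subset_insert a₁ T₁) h) _ _ (hT₁.2.2 u hu))
      (ReflTransGen.mono (fun x y h => step_mono (hF ▸ subset_insert a₂ T₂) h) _ _ (hT₂.2.2 u hu))
      (mem_insert_self a₁ T₁) rfl ha₁ (hF ▸ mem_insert_self a₂ T₂) rfl ha₂
  have ha : a₁ = a₂ :=
    (hOO (src a₁) (src_mem_supp a₁)).unique ⟨mem_insert_self a₁ T₁, rfl⟩
      ⟨hF ▸ mem_insert_self a₂ T₂, hr.symm⟩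
  have hTT : T₁ = T₂ := by
    have e1 : (insert a₁ T₁).erase a₁ = T₁ := erase_insert (root_arc_not_mem hT₁ rfl)
    have e2 : (insert a₂ T₂).erase a₂ = T₂ := erase_insert (root_arc_not_mem hT₂ rfl)
    rw [← e1, ← e2, hF, ha]
  simp only [hp₁, hp₂, Subtype.mk.injEq, Prod.mk.injEq]
  exact ⟨ha, hTT⟩

lemma gfun_surjective (u : V) : Function.Surjective (gfun src tgt u) := by
  rintro ⟨⟨b, T'⟩, hb, hT'⟩
  have hbT' : b ∉ T' := root_arc_not_mem hT' hb
  have hT'b : IsArborescence src tgt (src b) T' := by rw [hb]; exact hT'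
  set F := insert b T' with hFdef
  have hOO : OneOut src tgt F := oneOut_insert hT'b
  have hu : u ∈ supp src tgt := ⟨b, Or.inl hb⟩
  set f := nxt src tgt F with hfdef
  have hfu : f u = tgt b := nxt_eq_of_step hOO ⟨b, mem_insert_self b T', hb, rfl⟩
  -- u is periodic
  obtain ⟨m, hm⟩ := reach_iterate hOO
    (ReflTransGen.mono
      (fun x y h => step_mono (subset_insert b T') h) _ _ (hT'.2.2 (tgt b) (tgt_mem_supp b)))
  have hper : Function.IsPeriodicPt f (m + 1) u := by
    show f^[m+1] u = u
    rw [Function.iterate_succ_apply, hfu, hm]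
  set p := Function.minimalPeriod f u with hpdef
  have hppos : 0 < p :=
    Function.minimalPeriod_pos_of_mem_periodicPts ⟨m + 1, Nat.succ_pos m, hper⟩
  set r := f^[p - 1] u with hrdef
  have hrsupp : r ∈ supp src tgt := iterate_mem_supp hOO hu (p - 1)
  have hfr : f r = u := by
    have h1 : f^[(p-1)+1] u = f (f^[p-1] u) := Function.iterate_succ_apply' f (p-1) u
    have h2 : (p-1)+1 = p := by omega
    rw [hrdef, ← h1, h2]
    exact Function.iterate_minimalPeriod
  -- the arc of the cycle entering u
  obtain ⟨c, ⟨hcF, hcs⟩, hcuniq⟩ := hOO r hrsupp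
  have hct : tgt c = u := by
    have := nxt_eq_of_step hOO ⟨c, hcF, hcs, rfl⟩
    rw [← hfdef] at this
    rw [← this, hfr]
  set T := F.erase c with hTdef
  -- the orbit from u to r stays in T
  have horbit : ∀ k j : ℕ, j + k = p - 1 → ReflTransGen (Step src tgt T) (f^[j] u) r := by
    intro k
    induction k with
    | zero =>
      intro j hj
      rw [Nat.add_zero] at hj
      rw [hj, ← hrdef]
    | succ k ih =>
      intro j hj
      have hx : f^[j] u ∈ supp src tgt := iterate_mem_supp hOO hu j
      obtain ⟨e, ⟨heF, hes⟩, -⟩ := hOO (f^[j] u) hx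
      have het : tgt e = f^[j+1] u := by
        have h1 := nxt_eq_of_step hOO ⟨e, heF, hes, rfl⟩
        rw [← hfdef] at h1
        rw [← h1, Function.iterate_succ_apply']
      have hec : e ≠ c := by
        intro h
        have : f^[j] u = f^[p-1] u := by rw [← hes, h, hcs, hrdef]
        have hj' : j = p - 1 := Function.iterate_injOn_Iio_minimalPeriod
          (Set.mem_Iio.mpr (by omega)) (Set.mem_Iio.mpr (by omega)) this
        omega
      exact ReflTransGen.head ⟨e, mem_erase.mpr ⟨hec, heF⟩, hes, het⟩ (ih (j + 1) (by omega))
  have hur : ReflTransGen (Step src tgt T) u r := by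
    have := horbit (p - 1) 0 (by omega)
    simpa using this
  -- T is an arborescence toward src c
  have hT : IsArborescence src tgt (src c) T := by
    rw [hcs]
    refine ⟨?_, ?_, ?_⟩
    · intro e he hes
      exact (mem_erase.mp he).1 (hcuniq e ⟨(mem_erase.mp he).2, hes⟩)
    · intro v hv hvr
      obtain ⟨e, ⟨heF, hes⟩, huniq⟩ := hOO v hv
      have hec : e ≠ c := fun h => hvr (by rw [← hes, h, hcs])
      refine ⟨e, ⟨mem_erase.mpr ⟨hec, heF⟩, hes⟩, ?_⟩
      rintro e' ⟨he', he's⟩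
      exact huniq e' ⟨(mem_erase.mp he').2, he's⟩
    · intro v hv
      have hmono : ∀ x y : V, (Step src tgt T' x y ∧ x ≠ r) → Step src tgt T x y := by
        rintro x y ⟨⟨e, heT', hes, het⟩, hxr⟩
        have hec : e ≠ c := fun h => hxr (by rw [← hes, h, hcs])
        exact ⟨e, mem_erase.mpr ⟨hec, mem_insert_of_mem heT'⟩, hes, het⟩
      rcases reflTransGen_avoid r (hT'.2.2 v hv) with h' | h'
      · exact (ReflTransGen.mono (fun x y h => hmono x y h) _ _ h').trans hur
      · exact ReflTransGen.mono (fun x y h => hmono x y h) _ _ h'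
  -- assemble the preimage
  refine ⟨⟨(c, T), hct, hT⟩, ?_⟩
  set q : {q : A × Finset A // tgt q.1 = u ∧ IsArborescence src tgt (src q.1) q.2} :=
    ⟨(c, T), hct, hT⟩ with hq
  have hFq : insert (q : A × Finset A).1 (q : A × Finset A).2 = F := by
    show insert c T = F
    rw [hTdef]
    exact insert_erase hcF
  have hbq : gchoice src tgt u q = b := by
    have hspec := gchoice_spec u q
    rw [hFq] at hspec
    exact (hOO u hu).unique ⟨hspec.1, hspec.2⟩ ⟨mem_insert_self b T', hb⟩
  apply Subtype.ext
  show (gchoice src tgt u q, (insert c T).erase (gchoice src tgt u q)) = (b, T')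
  rw [show insert c T = F from hFq, hbq, hFdef, erase_insert hbT']

lemma outdeg_eq_card (v : V) : outdeg src v = (univ.filter fun a => src a = v).card := by
  rw [outdeg, Nat.card_eq_fintype_card, Fintype.card_subtype]

lemma indeg_eq_card (v : V) : indeg tgt v = (univ.filter fun a => tgt a = v).card := by
  rw [indeg, Nat.card_eq_fintype_card, Fintype.card_subtype]

lemma card_C_eq (u : V) :
    Nat.card {q : A × Finset A // src q.1 = u ∧ IsArborescence src tgt u q.2}
      = outdeg src u * tau src tgt u := by
  rw [Nat.card_congr (Equiv.subtypeProdEquivProd (p := fun a : A => src a = u)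
    (q := fun T : Finset A => IsArborescence src tgt u T)), Nat.card_prod]
  rfl

lemma card_D_eq (u : V) :
    Nat.card {q : A × Finset A // tgt q.1 = u ∧ IsArborescence src tgt (src q.1) q.2}
      = ∑ a ∈ univ.filter (fun a => tgt a = u), tau src tgt (src a) := by
  rw [Nat.card_congr (Equiv.subtypeProdEquivSigmaSubtype
    (fun (a : A) (T : Finset A) => tgt a = u ∧ IsArborescence src tgt (src a) T))]
  rw [Nat.card_eq_fintype_card, Fintype.card_sigma]
  have hpt : ∀ a : A,
      Fintype.card {T : Finset A // tgt a = u ∧ IsArborescence src tgt (src a) T}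
        = if tgt a = u then tau src tgt (src a) else 0 := by
    intro a
    by_cases h : tgt a = u
    · rw [if_pos h, tau, Nat.card_eq_fintype_card]
      exact Fintype.card_congr (Equiv.subtypeEquivRight (fun T => by simp [h]))
    · rw [if_neg h]
      exact Fintype.card_eq_zero_iff.mpr ⟨fun T => h T.2.1⟩
  rw [Finset.sum_congr rfl (fun a _ => hpt a), ← Finset.sum_filter]

/-- The harmonic identity: `outdeg u * τ(u) = ∑_{a : tgt a = u} τ(src a)`. -/
lemma key_identity (u : V) :
    outdeg src u * tau src tgt u
      = ∑ a ∈ univ.filter (fun a => tgt a = u), tau src tgt (src a) := by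
  rw [← card_C_eq, ← card_D_eq]
  exact (Nat.card_eq_of_bijective _ ⟨gfun_injective u, gfun_surjective u⟩).symm

end Digraph0

/-- For a directed Eulerian multigraph, the number of spanning arborescences rooted at `u`
is independent of the choice of the root vertex `u`. -/
theorem tau_root_independent {V : Type*} {A : Type*} [Fintype A]
    (src tgt : A → V) (hE : Digraph0.IsEulerian src tgt) :
    ∀ u ∈ Digraph0.supp src tgt, ∀ w ∈ Digraph0.supp src tgt,
      Digraph0.tau src tgt u = Digraph0.tau src tgt w := by
  classical
  obtain ⟨hbal, hconn⟩ := hE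
  intro u hu w hw
  open Finset Relation Digraph0 in
  -- the finite support
  set sF : Finset V := Finset.image src Finset.univ ∪ Finset.image tgt Finset.univ with hsF
  have hmem : ∀ v : V, v ∈ sF ↔ v ∈ Digraph0.supp src tgt := by
    intro v
    simp only [hsF, Finset.mem_union, Finset.mem_image, Finset.mem_univ, true_and,
      Digraph0.supp, Set.mem_setOf_eq]
    exact (exists_or).symm
  obtain ⟨v₀, hv₀s, hv₀max⟩ :=
    Finset.exists_max_image sF (Digraph0.tau src tgt) ⟨u, (hmem u).mpr hu⟩
  have hv₀supp := (hmem v₀).mp hv₀s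
  set τ := Digraph0.tau src tgt with hτ
  set M := τ v₀ with hM
  -- harmonic maximum step
  have hCl : ∀ a : A, τ (tgt a) = M → τ (src a) = M := by
    intro a hta
    set v := tgt a with hv
    have hkey := Digraph0.key_identity (src := src) (tgt := tgt) v
    rw [hbal v, Digraph0.indeg_eq_card, ← hτ, hta] at hkey
    by_contra hne
    have hle : ∀ e ∈ Finset.univ.filter (fun e => tgt e = v), τ (src e) ≤ M :=
      fun e _ => hv₀max (src e) ((hmem _).mpr (Digraph0.src_mem_supp e))
    have hlt : τ (src a) < M :=
      lt_of_le_of_ne (hv₀max _ ((hmem _).mpr (Digraph0.src_mem_supp a))) hne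
    have hsum : ∑ e ∈ Finset.univ.filter (fun e => tgt e = v), τ (src e)
        < ∑ _e ∈ Finset.univ.filter (fun e => tgt e = v), M :=
      Finset.sum_lt_sum hle ⟨a, Finset.mem_filter.mpr ⟨Finset.mem_univ a, rfl⟩, hlt⟩
    rw [Finset.sum_const, smul_eq_mul, ← hkey] at hsum
    exact lt_irrefl _ hsum
  -- directed reachability to v₀
  set Rel : V → V → Prop := fun x y => ∃ a : A, src a = x ∧ tgt a = y with hRel
  set S₁ : Finset A :=
    Finset.univ.filter (fun a => Relation.ReflTransGen Rel (src a) v₀) with hS₁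
  set S₂ : Finset A :=
    Finset.univ.filter (fun a => Relation.ReflTransGen Rel (tgt a) v₀) with hS₂
  have hS21 : S₂ ⊆ S₁ := by
    intro a ha
    rw [hS₂, Finset.mem_filter] at ha
    rw [hS₁, Finset.mem_filter]
    exact ⟨Finset.mem_univ a, Relation.ReflTransGen.head ⟨a, rfl, rfl⟩ ha.2⟩
  set RF : Finset V := sF.filter (fun v => Relation.ReflTransGen Rel v v₀) with hRF
  have hc1 : S₁.card = ∑ v ∈ RF, (Finset.univ.filter (fun a => src a = v)).card := by
    rw [Finset.card_eq_sum_card_fiberwise (f := src) (t := RF) ?side]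
    case side =>
      intro a ha
      rw [Finset.mem_coe, hS₁, Finset.mem_filter] at ha
      exact Finset.mem_filter.mpr ⟨(hmem _).mpr (Digraph0.src_mem_supp a), ha.2⟩
    apply Finset.sum_congr rfl
    intro v hv
    congr 1
    ext a
    rw [hS₁]
    simp only [Finset.mem_filter, Finset.mem_univ, true_and]
    constructor
    · rintro ⟨-, h⟩; exact h
    · intro h
      refine ⟨?_, h⟩
      rw [h]
      exact (Finset.mem_filter.mp hv).2
  have hc2 : S₂.card = ∑ v ∈ RF, (Finset.univ.filter (fun a => tgt a = v)).card := by
    rw [Finset.card_eq_sum_card_fiberwise (f := tgt) (t := RF) ?side]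
    case side =>
      intro a ha
      rw [Finset.mem_coe, hS₂, Finset.mem_filter] at ha
      exact Finset.mem_filter.mpr ⟨(hmem _).mpr (Digraph0.tgt_mem_supp a), ha.2⟩
    apply Finset.sum_congr rfl
    intro v hv
    congr 1
    ext a
    rw [hS₂]
    simp only [Finset.mem_filter, Finset.mem_univ, true_and]
    constructor
    · rintro ⟨-, h⟩; exact h
    · intro h
      refine ⟨?_, h⟩
      rw [h]
      exact (Finset.mem_filter.mp hv).2
  have hcards : S₁.card = S₂.card := by
    rw [hc1, hc2]
    refine Finset.sum_congr rfl (fun v _ => ?_)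
    rw [← Digraph0.outdeg_eq_card, ← Digraph0.indeg_eq_card, hbal v]
  have hS12 : S₂ = S₁ := Finset.eq_of_subset_of_card_le hS21 (le_of_eq hcards)
  have hclose : ∀ a : A, Relation.ReflTransGen Rel (src a) v₀ →
      Relation.ReflTransGen Rel (tgt a) v₀ := by
    intro a h
    have haS₁ : a ∈ S₁ := by rw [hS₁, Finset.mem_filter]; exact ⟨Finset.mem_univ a, h⟩
    rw [← hS12, hS₂, Finset.mem_filter] at haS₁
    exact haS₁.2
  -- every support vertex reaches v₀ along directed arcs
  have hreach : ∀ x : V, Relation.ReflTransGen (Digraph0.Adj src tgt) x v₀ →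
      Relation.ReflTransGen Rel x v₀ := by
    intro x hx
    induction hx using Relation.ReflTransGen.head_induction_on with
    | refl => exact Relation.ReflTransGen.refl
    | head hadj _ ih =>
      obtain ⟨a, h | h⟩ := hadj
      · exact Relation.ReflTransGen.head ⟨a, h.1, h.2⟩ ih
      · have := hclose a (by rw [h.1]; exact ih)
        rw [h.2] at this
        exact this
  -- propagate the maximum backwards
  have hprop : ∀ x : V, Relation.ReflTransGen Rel x v₀ → τ x = M := by
    intro x hx
    induction hx using Relation.ReflTransGen.head_induction_on with
    | refl => rfl
    | head hstep _ ih =>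
      obtain ⟨a, ha1, ha2⟩ := hstep
      rw [← ha1]
      exact hCl a (by rw [ha2]; exact ih)
  rw [hprop u (hreach u (hconn u hu v₀ hv₀supp)),
    hprop w (hreach w (hconn w hw v₀ hv₀supp))]
end

section
/- Let $\mathcal{H}$ be an $m$-uniform multi-hypergraph in which every vertex has degree divisible by $m$ (a Veblen hypergraph), and let $e$ be an edge of $\mathcal{H}$ containing a vertex $v$ that lies in no other edge (a cored vertex). If $\mathcal{H}$ admits an Euler rooting, then the multiplicity of $e$ in $\mathcal{H}$ is $km$ for some positive integer $k$, and every cored vertex of $e$ occurs as the root of $e$ exactly $k$ times in the rooting. -/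
open Finset

/-! Multi-hypergraphs with labelled edge occurrences `E`, edge map `mem`, and rootings. -/
namespace MultiHyp

variable {V : Type*} [DecidableEq V] {E : Type*} [Fintype E]

/-- Arcs of the digraph `R` associated with a rooting `r`: for each edge occurrence,
the `m-1` arcs from its root to the other vertices of the edge. -/
def ArcT (mem : E → Finset V) (r : E → V) : Type _ :=
  {p : E × V // p.2 ∈ mem p.1 ∧ p.2 ≠ r p.1}

instance (mem : E → Finset V) (r : E → V) [DecidableEq E] [Fintype V] :
    Fintype (ArcT mem r) := by
  unfold ArcT; infer_instance

/-- Source of an arc: the root of its edge occurrence. -/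
def asrc (mem : E → Finset V) (r : E → V) (a : ArcT mem r) : V := r a.1.1

/-- Target of an arc. -/
def atgt (mem : E → Finset V) (r : E → V) (a : ArcT mem r) : V := a.1.2

/-- A rooting chooses a root vertex inside each edge occurrence. -/
def IsRooting (mem : E → Finset V) (r : E → V) : Prop := ∀ e : E, r e ∈ mem e

/-- An Euler rooting: the associated digraph `R` is Eulerian. -/
def IsEulerRooting [Fintype V] [DecidableEq E] (mem : E → Finset V) (r : E → V) : Prop :=
  IsRooting mem r ∧ Digraph0.IsEulerian (asrc mem r) (atgt mem r)

/-- Degree of a vertex: number of edge occurrences containing it. -/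
noncomputable def degree (mem : E → Finset V) (v : V) : ℕ := Nat.card {e : E // v ∈ mem e}

/-- `m`-uniformity. -/
def MUniform (mem : E → Finset V) (m : ℕ) : Prop := ∀ e : E, (mem e).card = m

/-- Veblen hypergraph: every vertex degree is divisible by `m`. -/
def Veblen (mem : E → Finset V) (m : ℕ) : Prop := ∀ v : V, m ∣ degree mem v

end MultiHyp

/-- Let `H` be an `m`-uniform Veblen multi-hypergraph and `e₀` an edge occurrence containing a
cored vertex `v` (a vertex lying only in copies of `e₀`). If `H` admits an Euler rooting `r`,
then the multiplicity of the edge of `e₀` is `k * m` for some `k > 0`, and every cored vertex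
of this edge is its root exactly `k` times. -/
theorem cored_vertex_multiplicity {V : Type*} [Fintype V] [DecidableEq V]
    {E : Type*} [Fintype E] [DecidableEq E] (m : ℕ) (hm : 2 ≤ m)
    (mem : E → Finset V) (hunif : MultiHyp.MUniform mem m) (hveb : MultiHyp.Veblen mem m)
    (e₀ : E) (v : V) (hv : v ∈ mem e₀) (hcored : ∀ e : E, v ∈ mem e → mem e = mem e₀)
    (r : E → V) (hr : MultiHyp.IsEulerRooting mem r) :
    ∃ k : ℕ, 0 < k ∧ Nat.card {e : E // mem e = mem e₀} = k * m ∧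
      ∀ w ∈ mem e₀, (∀ e : E, w ∈ mem e → mem e = mem e₀) →
        Nat.card {e : E // mem e = mem e₀ ∧ r e = w} = k := by
  classical
  obtain ⟨hroot, hbal, -⟩ := hr
  -- the multiplicity N of the edge `mem e₀`
  have hNdeg : Nat.card {e : E // mem e = mem e₀} = MultiHyp.degree mem v := by
    rw [MultiHyp.degree]
    refine Nat.card_congr (Equiv.subtypeEquivRight fun e => ?_)
    exact ⟨fun h => h ▸ hv, hcored e⟩
  have hdvd : m ∣ Nat.card {e : E // mem e = mem e₀} := hNdeg ▸ hveb v
  have hNpos : 0 < Nat.card {e : E // mem e = mem e₀} := by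
    rw [Nat.card_eq_fintype_card, Fintype.card_pos_iff]
    exact ⟨⟨e₀, rfl⟩⟩
  obtain ⟨k, hk⟩ := hdvd
  have hkpos : 0 < k := by
    rcases Nat.eq_zero_or_pos k with h | h
    · rw [h, Nat.mul_zero] at hk; omega
    · exact h
  refine ⟨k, hkpos, by rw [hk, Nat.mul_comm], ?_⟩
  intro w hw hwc
  -- the set of edges rooted at w
  set B : Finset E := univ.filter (fun e => r e = w) with hB
  have hBeq : Nat.card {e : E // mem e = mem e₀ ∧ r e = w} = B.card := by
    rw [Nat.card_eq_fintype_card, Fintype.card_subtype, hB]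
    congr 1
    ext e
    simp only [mem_filter, mem_univ, true_and]
    exact ⟨fun h => h.2, fun h => ⟨hwc e (h ▸ hroot e), h⟩⟩
  -- outdegree of w
  have hout : Digraph0.outdeg (MultiHyp.asrc mem r) w = (m - 1) * B.card := by
    unfold Digraph0.outdeg MultiHyp.asrc MultiHyp.ArcT
    rw [Nat.card_congr ((Equiv.subtypeSubtypeEquivSubtypeInter
        (fun p : E × V => p.2 ∈ mem p.1 ∧ p.2 ≠ r p.1) (fun p => r p.1 = w)).trans
        (Equiv.subtypeProdEquivSigmaSubtype
          (fun e u => (u ∈ mem e ∧ u ≠ r e) ∧ r e = w)))]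
    rw [Nat.card_eq_fintype_card, Fintype.card_sigma]
    have : ∀ e : E, Fintype.card {u : V // (u ∈ mem e ∧ u ≠ r e) ∧ r e = w}
        = if r e = w then m - 1 else 0 := by
      intro e
      by_cases he : r e = w
      · rw [if_pos he]
        rw [Fintype.card_subtype]
        have : (univ.filter fun u : V => (u ∈ mem e ∧ u ≠ r e) ∧ r e = w)
            = (mem e).erase (r e) := by
          ext u
          simp [mem_erase, he, and_comm]
        rw [this, card_erase_of_mem (hroot e), hunif e]
      · rw [if_neg he]
        rw [Fintype.card_eq_zero_iff]
        exact ⟨fun x => he x.2.2⟩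
    rw [Finset.sum_congr rfl (fun e _ => this e), Finset.sum_ite, Finset.sum_const,
      Finset.sum_const, smul_eq_mul, smul_eq_mul, Nat.mul_zero, Nat.add_zero, hB,
      Nat.mul_comm]
  -- indegree of w
  have hin : Digraph0.indeg (MultiHyp.atgt mem r) w
      = (univ.filter fun e : E => w ∈ mem e ∧ w ≠ r e).card := by
    unfold Digraph0.indeg MultiHyp.atgt MultiHyp.ArcT
    rw [Nat.card_congr ((Equiv.subtypeSubtypeEquivSubtypeInter
        (fun p : E × V => p.2 ∈ mem p.1 ∧ p.2 ≠ r p.1) (fun p => p.2 = w)).trans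
        (Equiv.subtypeProdEquivSigmaSubtype
          (fun e u => (u ∈ mem e ∧ u ≠ r e) ∧ u = w)))]
    rw [Nat.card_eq_fintype_card, Fintype.card_sigma]
    have : ∀ e : E, Fintype.card {u : V // (u ∈ mem e ∧ u ≠ r e) ∧ u = w}
        = if w ∈ mem e ∧ w ≠ r e then 1 else 0 := by
      intro e
      by_cases he : w ∈ mem e ∧ w ≠ r e
      · rw [if_pos he]
        rw [Fintype.card_eq_one_iff]
        exact ⟨⟨w, ⟨he, rfl⟩⟩, fun x => Subtype.ext x.2.2⟩
      · rw [if_neg he]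
        rw [Fintype.card_eq_zero_iff]
        exact ⟨fun x => he (x.2.2 ▸ x.2.1)⟩
    rw [Finset.sum_congr rfl (fun e _ => this e), Finset.sum_ite, Finset.sum_const,
      Finset.sum_const, smul_eq_mul, smul_eq_mul, Nat.mul_zero, Nat.add_zero, Nat.mul_one]
  -- total degree of w
  have hA : (univ.filter fun e : E => w ∈ mem e).card = k * m := by
    rw [Nat.mul_comm k m, ← hk, Nat.card_eq_fintype_card, Fintype.card_subtype]
    congr 1
    ext e
    simp only [mem_filter, mem_univ, true_and]
    exact ⟨hwc e, fun h => h ▸ hw⟩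
  -- split the degree
  have hsplit : (univ.filter fun e : E => w ∈ mem e).card
      = (univ.filter fun e : E => w ∈ mem e ∧ w ≠ r e).card + B.card := by
    rw [hB, ← Finset.card_union_of_disjoint]
    · congr 1
      ext e
      simp only [mem_union, mem_filter, mem_univ, true_and]
      constructor
      · intro h
        by_cases hre : r e = w
        · exact Or.inr hre
        · exact Or.inl ⟨h, fun habs => hre habs.symm⟩
      · rintro (⟨h, -⟩ | h)
        · exact h
        · exact h ▸ hroot e
    · rw [Finset.disjoint_left]
      rintro e he hre
      simp only [mem_filter, mem_univ, true_and] at he hre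
      exact he.2 hre.symm
  have hbalw := hbal w
  rw [hout, hin] at hbalw
  -- conclude
  have hmB : m * B.card = k * m := by
    have h1 : (m - 1) * B.card + B.card = k * m := by omega
    have h2 : (m - 1) * B.card + B.card = m * B.card := by
      have : m - 1 + 1 = m := by omega
      rw [← Nat.succ_mul, ← Nat.add_one, this]
    omega
  rw [hBeq]
  have : m * B.card = m * k := by rw [hmB, Nat.mul_comm]
  exact Nat.eq_of_mul_eq_mul_left (by omega) this
end

section
/- Let $\mathcal{H}$ be an $m$-uniform Veblen multi-hypergraph whose underlying simple hypergraph is a hypertree (connected and acyclic). Then $\mathcal{H}$ admits at most one Euler rooting up to the ordering, and in it, all vertices of each edge occur as roots of that edge equally often; consequently every edge of $\mathcal{H}$ has multiplicity divisible by $m$. -/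
open Finset

/-! Hypergraphs as finite sets of edges; connectivity, cycles, hypertrees. -/
namespace HypG

variable {V : Type*} [DecidableEq V]

/-- Connectivity of a hypergraph on a vertex set `W`. -/
def HConn (K : Finset (Finset V)) (W : Finset V) : Prop :=
  ∀ x ∈ W, ∀ y ∈ W, Relation.ReflTransGen (fun a b => ∃ e ∈ K, a ∈ e ∧ b ∈ e) x y

/-- `m`-uniformity of a hypergraph. -/
def Uniform (K : Finset (Finset V)) (m : ℕ) : Prop := ∀ e ∈ K, e.card = m

/-- The vertex set of a hypergraph (union of its edges). -/
def vset (K : Finset (Finset V)) : Finset V := K.biUnion id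

/-- A cycle: an alternating sequence `v₀ e₁ v₁ ⋯ e_l v_l = v₀` with `l ≥ 2`,
with pairwise distinct vertices and pairwise distinct edges, `v_i, v_{i+1} ∈ e_{i+1}`. -/
def HasCycle (K : Finset (Finset V)) : Prop :=
  ∃ l : ℕ, ∃ f : Fin (l + 2) → V, ∃ g : Fin (l + 2) → Finset V,
    Function.Injective f ∧ Function.Injective g ∧ (∀ i, g i ∈ K) ∧
    ∀ i : Fin (l + 2), f i ∈ g i ∧ f (i + 1) ∈ g i

/-- A hypertree: a connected acyclic hypergraph (every vertex covered by an edge). -/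
def IsHypertree (K : Finset (Finset V)) (m : ℕ) : Prop :=
  Uniform K m ∧ HConn K (vset K) ∧ ¬ HasCycle K

end HypG


namespace HT
set_option linter.unusedSectionVars false

variable {V : Type*} [DecidableEq V]

inductive W (K : Finset (Finset V)) (S : Finset V) : V → List (Finset V × V) → V → Prop
  | nil (x : V) : W K S x [] x
  | cons {x u z : V} {e : Finset V} {L : List (Finset V × V)}
      (heK : e ∈ K) (heS : e ≠ S) (hx : x ∈ e) (hu : u ∈ e)
      (hw : W K S u L z) : W K S x ((e, u) :: L) z

variable {K : Finset (Finset V)} {S : Finset V}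

def verts (x : V) (L : List (Finset V × V)) : List V := x :: L.map Prod.snd

@[simp] lemma verts_nil (x : V) : verts x ([] : List (Finset V × V)) = [x] := rfl

@[simp] lemma verts_cons (x : V) (e : Finset V) (u : V) (L : List (Finset V × V)) :
    verts x ((e, u) :: L) = x :: verts u L := rfl

lemma verts_length (x : V) (L : List (Finset V × V)) : (verts x L).length = L.length + 1 := by
  simp [verts]

lemma W_nil_eq {x y : V} (h : W K S x [] y) : x = y := by cases h; rfl

lemma W_append {x y z : V} {L₁ L₂ : List (Finset V × V)}
    (h₁ : W K S x L₁ y) (h₂ : W K S y L₂ z) : W K S x (L₁ ++ L₂) z := by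
  induction h₁ with
  | nil => exact h₂
  | cons heK heS hx hu _ ih => exact W.cons heK heS hx hu (ih h₂)

lemma W_append_split {x z : V} {L₁ L₂ : List (Finset V × V)}
    (h : W K S x (L₁ ++ L₂) z) : ∃ y, W K S x L₁ y ∧ W K S y L₂ z := by
  induction L₁ generalizing x with
  | nil => exact ⟨x, W.nil x, h⟩
  | cons p t ih =>
    cases h with
    | cons heK heS hx hu hw =>
      obtain ⟨y, h1, h2⟩ := ih hw
      exact ⟨y, W.cons heK heS hx hu h1, h2⟩

lemma W_drop {x z v : V} {L : List (Finset V × V)} (h : W K S x L z) (hv : v ∈ verts x L) :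
    ∃ L', W K S v L' z ∧ (verts v L') <:+ (verts x L) := by
  induction h with
  | nil y =>
    simp [verts] at hv
    subst hv
    exact ⟨[], W.nil v, List.suffix_refl _⟩
  | @cons x u z e L heK heS hx hu hw ih =>
    rw [verts_cons] at hv
    rcases List.mem_cons.mp hv with rfl | hv'
    · exact ⟨(e, u) :: L, W.cons heK heS hx hu hw, List.suffix_refl _⟩
    · obtain ⟨L', h1, h2⟩ := ih hv'
      exact ⟨L', h1, h2.trans (List.suffix_cons _ _)⟩

lemma W_bypass {x z : V} {L : List (Finset V × V)} (h : W K S x L z) :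
    ∃ L', W K S x L' z ∧ L'.length ≤ L.length ∧ (verts x L').Nodup := by
  induction h with
  | nil y => exact ⟨[], W.nil y, le_refl _, by simp⟩
  | @cons x u z e L heK heS hx hu hw ih =>
    obtain ⟨L', h1, hlen, hnd⟩ := ih
    by_cases hxv : x ∈ verts u L'
    · obtain ⟨L'', h2, hsuf⟩ := W_drop h1 hxv
      have hl : L''.length ≤ L'.length := by
        have := hsuf.length_le
        simp only [verts_length] at this
        omega
      exact ⟨L'', h2, by simp; omega, hnd.sublist hsuf.sublist⟩
    · exact ⟨(e, u) :: L', W.cons heK heS hx hu h1, by simpa,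
        by rw [verts_cons]; exact List.nodup_cons.mpr ⟨hxv, hnd⟩⟩

lemma W_edges {x z : V} {L : List (Finset V × V)} (h : W K S x L z) :
    ∀ p ∈ L, p.1 ∈ K ∧ p.1 ≠ S := by
  induction h with
  | nil => simp
  | cons heK heS hx hu hw ih =>
    intro p hp
    rcases List.mem_cons.mp hp with rfl | hp'
    · exact ⟨heK, heS⟩
    · exact ih p hp'

lemma dup_split {α β : Type*} {f : α → β} :
    ∀ {L : List α}, ¬ (L.map f).Nodup →
      ∃ (A : List α) (p : α) (B : List α), L = A ++ p :: B ∧ f p ∈ B.map f := by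
  intro L h
  induction L with
  | nil => simp at h
  | cons q t ih =>
    by_cases hq : f q ∈ t.map f
    · exact ⟨[], q, t, rfl, hq⟩
    · have ht : ¬ (t.map f).Nodup := by
        intro hnd
        exact h (by simpa [List.nodup_cons, hq] using hnd)
      obtain ⟨A, p, B, rfl, hB⟩ := ih ht
      exact ⟨q :: A, p, B, rfl, hB⟩

lemma W_good {x z : V} : ∀ (n : ℕ) (L : List (Finset V × V)), L.length ≤ n → W K S x L z →
    ∃ L', W K S x L' z ∧ (verts x L').Nodup ∧ (L'.map Prod.fst).Nodup := by
  intro n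
  induction n with
  | zero =>
    intro L hL h
    have : L = [] := List.length_eq_zero_iff.mp (Nat.le_zero.mp hL)
    subst this
    exact ⟨[], h, by simp, by simp⟩
  | succ n ih =>
    intro L hL h
    obtain ⟨L₁, h1, hlen1, hnd1⟩ := W_bypass h
    by_cases he : (L₁.map Prod.fst).Nodup
    · exact ⟨L₁, h1, hnd1, he⟩
    · obtain ⟨A, p, B, rfl, hpB⟩ := dup_split he
      obtain ⟨q, hqB, hq⟩ := List.mem_map.mp hpB
      obtain ⟨C, D, rfl⟩ := List.append_of_mem hqB
      obtain ⟨e1, u1⟩ := p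
      obtain ⟨e2, u2⟩ := q
      have hq' : e2 = e1 := hq
      subst hq'
      obtain ⟨a, ha1, ha2⟩ := W_append_split h1
      cases ha2 with
      | cons heK heS hax hau hw =>
        obtain ⟨b, hb1, hb2⟩ := W_append_split hw
        cases hb2 with
        | cons heK' heS' hbx hbu hw' =>
          have hw2 : W K S x (A ++ (e2, u2) :: D) z := W_append ha1 (W.cons heK heS hax hbu hw')
          have hlen2 : (A ++ (e2, u2) :: D).length ≤ n := by
            simp at hL hlen1 ⊢
            omega
          exact ih _ hlen2 hw2

lemma W_getElem {x z : V} {L : List (Finset V × V)} (h : W K S x L z) :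
    ∀ i, (hi : i < L.length) →
      (verts x L)[i]'(by rw [verts_length]; omega) ∈ (L[i]'hi).1 ∧
      (verts x L)[i+1]'(by rw [verts_length]; omega) ∈ (L[i]'hi).1 := by
  induction h with
  | nil => intro i hi; simp at hi
  | @cons x u z e L heK heS hx hu hw ih =>
    intro i hi
    cases i with
    | zero => simpa [verts] using ⟨hx, hu⟩
    | succ j =>
      have hj : j < L.length := by simpa using hi
      simpa [verts] using ih j hj

lemma W_last {x z : V} {L : List (Finset V × V)} (h : W K S x L z) :
    (verts x L)[L.length]'(by rw [verts_length]; omega) = z := by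
  induction h with
  | nil => simp [verts]
  | @cons x u z e L heK heS hx hu hw ih => simpa [verts] using ih

lemma no_walk (hK : ¬ HypG.HasCycle K) (hS : S ∈ K) {x y : V} (hx : x ∈ S) (hy : y ∈ S)
    (hxy : x ≠ y) {L : List (Finset V × V)} (h : W K S x L y) : False := by
  obtain ⟨L', hw, hvnd, hend⟩ := W_good L.length L le_rfl h
  -- L' ≠ []
  cases hL' : L' with
  | nil => subst hL'; exact hxy (W_nil_eq hw)
  | cons p t =>
  have hlenpos : 0 < L'.length := by rw [hL']; simp
  clear hL'
  set l := L'.length - 1 with hl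
  have hll : L'.length = l + 1 := by omega
  apply hK
  refine ⟨l, fun i => (verts x L')[i.val]'(by rw [verts_length]; omega),
    fun i => ((L'.map Prod.fst) ++ [S])[i.val]'(by simp; omega), ?_, ?_, ?_, ?_⟩
  · intro i j hij
    have := (List.nodup_iff_injective_get.mp hvnd)
      (a₁ := ⟨i.val, by rw [verts_length]; omega⟩) (a₂ := ⟨j.val, by rw [verts_length]; omega⟩)
    have h2 := this (by simpa [List.get_eq_getElem] using hij)
    exact Fin.ext (by simpa using congrArg Fin.val h2)
  · have hndg : ((L'.map Prod.fst) ++ [S]).Nodup := by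
      rw [List.nodup_append]
      refine ⟨hend, by simp, ?_⟩
      intro a ha b hb
      simp at hb
      subst hb
      intro hab
      obtain ⟨q, hq, hq2⟩ := List.mem_map.mp ha
      exact (W_edges hw q hq).2 (hq2.trans hab)
    intro i j hij
    have := (List.nodup_iff_injective_get.mp hndg)
      (a₁ := ⟨i.val, by simp; omega⟩) (a₂ := ⟨j.val, by simp; omega⟩)
    have h2 := this (by simpa [List.get_eq_getElem] using hij)
    exact Fin.ext (by simpa using congrArg Fin.val h2)
  · intro i
    beta_reduce
    rcases Nat.lt_or_ge i.val (l + 1) with hi | hi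
    · have hi' : i.val < (L'.map Prod.fst).length := by simpa using (by omega : i.val < L'.length)
      rw [List.getElem_append_left hi']
      rw [List.getElem_map]
      exact (W_edges hw _ (List.getElem_mem _)).1
    · have hi2 : i.val = l + 1 := by omega
      have : ((L'.map Prod.fst) ++ [S])[i.val]'(by simp; omega) = S := by
        rw [List.getElem_append_right (by simp; omega)]
        simp [hi2, hll]
      rw [this]
      exact hS
  · intro i
    beta_reduce
    rcases Nat.lt_or_ge i.val (l + 1) with hi | hi
    · have hstep := W_getElem hw i.val (by omega)
      have hadd : ((i + 1 : Fin (l + 2))).val = i.val + 1 := by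
        rw [Fin.val_add_one_of_lt]
        exact Fin.lt_def.mpr (by simpa using (by omega : i.val < l + 1))
      have hi' : i.val < (L'.map Prod.fst).length := by simpa using (by omega : i.val < L'.length)
      constructor
      · rw [List.getElem_append_left hi', List.getElem_map]
        exact hstep.1
      · rw [List.getElem_append_left hi', List.getElem_map]
        simp only [hadd]
        exact hstep.2
    · have hi2 : i.val = l + 1 := by omega
      have hgi : (List.map Prod.fst L' ++ [S])[i.val]'(by simp; omega) = S := by
        rw [List.getElem_append_right (by simp; omega)]
        simp [hi2, hll]
      rw [hgi]
      constructor
      · have h0 := W_last hw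
        simp only [hll] at h0
        simp only [hi2]
        rw [h0]
        exact hy
      · have hilast : i = Fin.last (l + 1) := Fin.ext (by simpa using hi2)
        have h01 : ((i + 1 : Fin (l + 2))).val = 0 := by
          rw [hilast, Fin.last_add_one]
          rfl
        simp only [h01]
        show (verts x L')[0]'(by rw [verts_length]; omega) ∈ S
        simp [verts]
        exact hx

lemma rtg_walk {x y : V} {K : Finset (Finset V)} {S : Finset V}
    (h : Relation.ReflTransGen (fun a b => ∃ e ∈ K, e ≠ S ∧ a ∈ e ∧ b ∈ e) x y) :
    ∃ L, W K S x L y := by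
  induction h using Relation.ReflTransGen.head_induction_on with
  | refl => exact ⟨[], W.nil _⟩
  | head hab _ ih =>
    obtain ⟨L, hw⟩ := ih
    obtain ⟨e, heK, heS, ha, hb⟩ := hab
    exact ⟨(e, _) :: L, W.cons heK heS ha hb hw⟩



lemma ncard_split {α : Type*} [Fintype α] (P Q : α → Prop) :
    Nat.card {a // P a} = Nat.card {a // P a ∧ Q a} + Nat.card {a // P a ∧ ¬ Q a} := by
  classical
  simp only [Nat.card_eq_fintype_card, Fintype.card_subtype]
  rw [← Finset.filter_filter, ← Finset.filter_filter,
    Finset.card_filter_add_card_filter_not]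

lemma cut_eq {V A : Type*} [Fintype V] [Fintype A] {src tgt : A → V}
    (hb : Digraph0.Balanced src tgt) (p : V → Prop) :
    Nat.card {a : A // p (src a) ∧ ¬ p (tgt a)} = Nat.card {a : A // p (tgt a) ∧ ¬ p (src a)} := by
  classical
  set U : Finset V := Finset.univ.filter p with hU
  have h1 : ∀ f : A → V, (Finset.univ.filter (fun a => p (f a))).card
      = ∑ v ∈ U, (Finset.univ.filter (fun a => f a = v)).card := by
    intro f
    rw [Finset.card_eq_sum_card_fiberwise
      (f := f) (t := U) (fun a ha => by simp [hU] at ha ⊢; exact ha)]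
    refine Finset.sum_congr rfl (fun v hv => ?_)
    congr 1
    ext a
    simp only [Finset.mem_filter, Finset.mem_univ, true_and, hU] at hv ⊢
    constructor
    · tauto
    · intro h; exact ⟨h ▸ hv, h⟩
  have hdeg : ∀ v, (Finset.univ.filter (fun a => src a = v)).card
      = (Finset.univ.filter (fun a => tgt a = v)).card := by
    intro v
    have := hb v
    simpa [Digraph0.outdeg, Digraph0.indeg, Nat.card_eq_fintype_card,
      Fintype.card_subtype] using this
  have esum : (Finset.univ.filter (fun a => p (src a))).card
      = (Finset.univ.filter (fun a => p (tgt a))).card := by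
    rw [h1 src, h1 tgt]
    exact Finset.sum_congr rfl (fun v _ => hdeg v)
  have hsplit : ∀ f g : A → V, (Finset.univ.filter (fun a => p (f a))).card
      = (Finset.univ.filter (fun a => p (f a) ∧ p (g a))).card
        + (Finset.univ.filter (fun a => p (f a) ∧ ¬ p (g a))).card := by
    intro f g
    rw [← Finset.filter_filter, ← Finset.filter_filter,
      Finset.card_filter_add_card_filter_not]
  have hcomm : (Finset.univ.filter (fun a => p (src a) ∧ p (tgt a))).card
      = (Finset.univ.filter (fun a => p (tgt a) ∧ p (src a))).card := by
    congr 1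
    ext a
    simp only [Finset.mem_filter]
    tauto
  have s1 := hsplit src tgt
  have s2 := hsplit tgt src
  have c1 : Nat.card {a : A // p (src a) ∧ ¬ p (tgt a)}
      = (Finset.univ.filter (fun a => p (src a) ∧ ¬ p (tgt a))).card := by
    simp [Nat.card_eq_fintype_card, Fintype.card_subtype]
  have c2 : Nat.card {a : A // p (tgt a) ∧ ¬ p (src a)}
      = (Finset.univ.filter (fun a => p (tgt a) ∧ ¬ p (src a))).card := by
    simp [Nat.card_eq_fintype_card, Fintype.card_subtype]
  omega

end HT

namespace HT

section Arc
open MultiHyp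
variable {V E : Type*} [DecidableEq V] {mem : E → Finset V} {r : E → V}

def aE (a : ArcT mem r) : E := (a : {p : E × V // p.2 ∈ mem p.1 ∧ p.2 ≠ r p.1}).1.1

def aV (a : ArcT mem r) : V := (a : {p : E × V // p.2 ∈ mem p.1 ∧ p.2 ≠ r p.1}).1.2

lemma aV_mem (a : ArcT mem r) : aV a ∈ mem (aE a) :=
  (a : {p : E × V // p.2 ∈ mem p.1 ∧ p.2 ≠ r p.1}).2.1

lemma aV_ne (a : ArcT mem r) : aV a ≠ r (aE a) :=
  (a : {p : E × V // p.2 ∈ mem p.1 ∧ p.2 ≠ r p.1}).2.2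

def amk (e : E) (v : V) (h1 : v ∈ mem e) (h2 : v ≠ r e) : ArcT mem r :=
  (⟨(e, v), h1, h2⟩ : {p : E × V // p.2 ∈ mem p.1 ∧ p.2 ≠ r p.1})

@[simp] lemma aE_amk (e : E) (v : V) (h1 : v ∈ mem e) (h2 : v ≠ r e) :
    aE (amk e v h1 h2) = e := rfl

@[simp] lemma aV_amk (e : E) (v : V) (h1 : v ∈ mem e) (h2 : v ≠ r e) :
    aV (amk e v h1 h2) = v := rfl

lemma asrc_eq (a : ArcT mem r) : asrc mem r a = r (aE a) := rfl

lemma atgt_eq (a : ArcT mem r) : atgt mem r a = aV a := rfl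

end Arc

open MultiHyp in
lemma key {V E : Type*} [Fintype V] [DecidableEq V] [Fintype E] [DecidableEq E]
    {m : ℕ} (hm : 2 ≤ m) {mem : E → Finset V} (hunif : MultiHyp.MUniform mem m)
    (hcyc : ¬ HypG.HasCycle (Finset.image mem Finset.univ))
    {r : E → V} (hr : MultiHyp.IsEulerRooting mem r) (e₀ : E) {x : V} (hx : x ∈ mem e₀) :
    m * Nat.card {e : E // mem e = mem e₀ ∧ r e = x} = Nat.card {e : E // mem e = mem e₀} := by
  classical
  set K := Finset.image mem Finset.univ with hK
  set S := mem e₀ with hSdef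
  have hSK : S ∈ K := Finset.mem_image_of_mem mem (Finset.mem_univ e₀)
  set Reach : V → Prop := fun v =>
    Relation.ReflTransGen (fun a b => ∃ e ∈ K, e ≠ S ∧ a ∈ e ∧ b ∈ e) x v with hReach
  have hRx : Reach x := Relation.ReflTransGen.refl
  have hi : ∀ y ∈ S, Reach y → y = x := by
    intro y hy hry
    by_contra hne
    obtain ⟨L, hw⟩ := rtg_walk hry
    exact no_walk hcyc hSK hx hy (Ne.symm hne) hw
  have hii : ∀ e : E, mem e ≠ S → ∀ v ∈ mem e, ∀ w ∈ mem e, Reach v → Reach w := by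
    intro e he v hv w hw hrv
    exact hrv.tail ⟨mem e, Finset.mem_image_of_mem mem (Finset.mem_univ e), he, hv, hw⟩
  have hbal := hr.2.1
  have hcut := cut_eq (src := asrc mem r) (tgt := atgt mem r) hbal Reach
  have hout : Nat.card {a : ArcT mem r // Reach (asrc mem r a) ∧ ¬ Reach (atgt mem r a)}
      = Nat.card {a : ArcT mem r // mem (aE a) = S ∧ r (aE a) = x} := by
    apply Nat.card_congr
    apply Equiv.subtypeEquivRight
    intro a
    have hv : aV a ∈ mem (aE a) := aV_mem a
    have hvr : aV a ≠ r (aE a) := aV_ne a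
    rw [asrc_eq, atgt_eq]
    constructor
    · rintro ⟨h1, h2⟩
      have hmemS : mem (aE a) = S := by
        by_contra hne
        exact h2 (hii (aE a) hne (r (aE a)) (hr.1 (aE a)) (aV a) hv h1)
      exact ⟨hmemS, hi (r (aE a)) (hmemS ▸ hr.1 (aE a)) h1⟩
    · rintro ⟨hmemS, hre⟩
      refine ⟨hre.symm ▸ hRx, fun hc => hvr ?_⟩
      exact (hi (aV a) (hmemS ▸ hv) hc).trans hre.symm
  have hin : Nat.card {a : ArcT mem r // Reach (atgt mem r a) ∧ ¬ Reach (asrc mem r a)}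
      = Nat.card {a : ArcT mem r // mem (aE a) = S ∧ r (aE a) ≠ x ∧ aV a = x} := by
    apply Nat.card_congr
    apply Equiv.subtypeEquivRight
    intro a
    have hv : aV a ∈ mem (aE a) := aV_mem a
    rw [asrc_eq, atgt_eq]
    constructor
    · rintro ⟨h1, h2⟩
      have hmemS : mem (aE a) = S := by
        by_contra hne
        exact h2 (hii (aE a) hne (aV a) hv (r (aE a)) (hr.1 (aE a)) h1)
      exact ⟨hmemS, fun hc => h2 (hc.symm ▸ hRx), hi (aV a) (hmemS ▸ hv) h1⟩
    · rintro ⟨hmemS, hrex, hvx⟩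
      refine ⟨hvx.symm ▸ hRx, fun hc => hrex ?_⟩
      exact hi (r (aE a)) (hmemS ▸ hr.1 (aE a)) hc
  have E1 : {a : ArcT mem r // mem (aE a) = S ∧ r (aE a) = x}
      ≃ {e : E // mem e = S ∧ r e = x} × {v : V // v ∈ S ∧ v ≠ x} :=
    { toFun := fun a => (⟨aE a.1, a.2⟩,
        ⟨aV a.1, by have h := aV_mem a.1; rw [a.2.1] at h; exact h,
          by have h := aV_ne a.1; rw [a.2.2] at h; exact h⟩)
      invFun := fun p => ⟨amk p.1.1 p.2.1
          (by have h := p.2.2.1; rw [p.1.2.1]; exact h)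
          (by have h := p.2.2.2; rw [p.1.2.2]; exact h),
        by simpa using p.1.2⟩
      left_inv := fun a => rfl
      right_inv := fun p => rfl }
  have E2 : {a : ArcT mem r // mem (aE a) = S ∧ r (aE a) ≠ x ∧ aV a = x}
      ≃ {e : E // mem e = S ∧ r e ≠ x} :=
    { toFun := fun a => ⟨aE a.1, a.2.1, a.2.2.1⟩
      invFun := fun e => ⟨amk e.1 x (by rw [e.2.1]; exact hx) (Ne.symm e.2.2),
        ⟨e.2.1, e.2.2, rfl⟩⟩
      left_inv := fun a => by
        apply Subtype.ext
        have hvx := a.2.2.2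
        apply Subtype.ext (p := fun p : E × V => p.2 ∈ mem p.1 ∧ p.2 ≠ r p.1)
        exact Prod.ext rfl hvx.symm
      right_inv := fun e => rfl }
  have hcardv : Nat.card {v : V // v ∈ S ∧ v ≠ x} = m - 1 := by
    have hiff : ∀ v : V, (v ∈ S ∧ v ≠ x) ↔ v ∈ S.erase x := by
      intro v; rw [Finset.mem_erase]; tauto
    rw [Nat.card_congr (Equiv.subtypeEquivRight hiff), Nat.card_eq_fintype_card,
      Fintype.card_coe, Finset.card_erase_of_mem hx, hSdef, hunif e₀]
  have hn : Nat.card {a : ArcT mem r // mem (aE a) = S ∧ r (aE a) = x}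
      = Nat.card {e : E // mem e = S ∧ r e = x} * (m - 1) := by
    rw [Nat.card_congr E1, Nat.card_prod, hcardv]
  have hk : Nat.card {a : ArcT mem r // mem (aE a) = S ∧ r (aE a) ≠ x ∧ aV a = x}
      = Nat.card {e : E // mem e = S ∧ r e ≠ x} := Nat.card_congr E2
  have hmain : Nat.card {e : E // mem e = S ∧ r e = x} * (m - 1)
      = Nat.card {e : E // mem e = S ∧ r e ≠ x} := by
    rw [← hn, ← hk, ← hout, ← hin, hcut]
  have hsplit := ncard_split (fun e : E => mem e = S) (fun e : E => r e = x)
  rw [hsplit, ← hmain]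
  have hm1 : m - 1 + 1 = m := by omega
  calc m * Nat.card {e : E // mem e = S ∧ r e = x}
      = (m - 1 + 1) * Nat.card {e : E // mem e = S ∧ r e = x} := by rw [hm1]
    _ = Nat.card {e : E // mem e = S ∧ r e = x}
        + Nat.card {e : E // mem e = S ∧ r e = x} * (m - 1) := by ring
end HT

/-- Let `H` be an `m`-uniform Veblen multi-hypergraph whose underlying simple hypergraph is a
hypertree. Then `H` has at most one Euler rooting up to ordering (the multiset of rooted edge
occurrences is uniquely determined), in any Euler rooting all vertices of each edge occur as
roots of that edge equally often, and (if an Euler rooting exists) every edge has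
multiplicity divisible by `m`. -/
theorem euler_rooting_of_hypertree_unique {V : Type*} [Fintype V] [DecidableEq V]
    {E : Type*} [Fintype E] [DecidableEq E] (m : ℕ) (hm : 2 ≤ m)
    (mem : E → Finset V) (hunif : MultiHyp.MUniform mem m) (hveb : MultiHyp.Veblen mem m)
    (htree : HypG.IsHypertree (Finset.image mem Finset.univ) m) :
    (∀ r₁ r₂ : E → V, MultiHyp.IsEulerRooting mem r₁ → MultiHyp.IsEulerRooting mem r₂ →
        ∀ (S : Finset V) (x : V),
          Nat.card {e : E // mem e = S ∧ r₁ e = x} =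
            Nat.card {e : E // mem e = S ∧ r₂ e = x}) ∧
    (∀ r : E → V, MultiHyp.IsEulerRooting mem r → ∀ e₀ : E, ∀ x ∈ mem e₀, ∀ y ∈ mem e₀,
        Nat.card {e : E // mem e = mem e₀ ∧ r e = x} =
          Nat.card {e : E // mem e = mem e₀ ∧ r e = y}) ∧
    ((∃ r : E → V, MultiHyp.IsEulerRooting mem r) →
        ∀ e₀ : E, m ∣ Nat.card {e : E // mem e = mem e₀}) := by
  classical
  have hcyc : ¬ HypG.HasCycle (Finset.image mem Finset.univ) := htree.2.2
  refine ⟨?_, ?_, ?_⟩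
  · intro r₁ r₂ h1 h2 S x
    by_cases hS : ∃ e₀ : E, mem e₀ = S
    · obtain ⟨e₀, rfl⟩ := hS
      by_cases hx : x ∈ mem e₀
      · have k1 := HT.key hm hunif hcyc h1 e₀ hx
        have k2 := HT.key hm hunif hcyc h2 e₀ hx
        exact Nat.eq_of_mul_eq_mul_left (by omega) (k1.trans k2.symm)
      · have z1 : IsEmpty {e : E // mem e = mem e₀ ∧ r₁ e = x} :=
          ⟨fun ⟨e, he, hre⟩ => hx (by rw [← he, ← hre]; exact h1.1 e)⟩
        have z2 : IsEmpty {e : E // mem e = mem e₀ ∧ r₂ e = x} :=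
          ⟨fun ⟨e, he, hre⟩ => hx (by rw [← he, ← hre]; exact h2.1 e)⟩
        rw [Nat.card_of_isEmpty, Nat.card_of_isEmpty]
    · have z1 : IsEmpty {e : E // mem e = S ∧ r₁ e = x} :=
        ⟨fun ⟨e, he, _⟩ => hS ⟨e, he⟩⟩
      have z2 : IsEmpty {e : E // mem e = S ∧ r₂ e = x} :=
        ⟨fun ⟨e, he, _⟩ => hS ⟨e, he⟩⟩
      rw [Nat.card_of_isEmpty, Nat.card_of_isEmpty]
  · intro r hr e₀ x hxm y hym
    have kx := HT.key hm hunif hcyc hr e₀ hxm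
    have ky := HT.key hm hunif hcyc hr e₀ hym
    exact Nat.eq_of_mul_eq_mul_left (by omega) (kx.trans ky.symm)
  · rintro ⟨r, hr⟩ e₀
    have hne : (mem e₀).Nonempty := by
      rw [← Finset.card_pos, hunif e₀]; omega
    obtain ⟨x, hx⟩ := hne
    exact ⟨_, (HT.key hm hunif hcyc hr e₀ hx).symm⟩
end

section
/- For positive integers $m_i, m_i'$ with $m_i\ne m_i'$ and $m_{i-1}\ne m_{i-1}'$, the quantity $f_i=\dfrac{\binom{m_{i-1}+m_i-1}{m_{i-1}-1}\binom{m_{i-1}'+m_i'-1}{m_{i-1}'-1}-\binom{m_{i-1}'+m_i-1}{m_{i-1}'-1}\binom{m_{i-1}+m_i'-1}{m_{i-1}-1}}{(m_{i-1}'-m_{i-1})(m_i'-m_i)}$ is strictly positive. -/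
private lemma ascFact_mono (d : ℕ) : ∀ {p r : ℕ}, p ≤ r →
    Nat.ascFactorial p d ≤ Nat.ascFactorial r d := by
  induction d with
  | zero => intro p r _; simp [Nat.ascFactorial_zero]
  | succ k ih =>
    intro p r h
    rw [Nat.ascFactorial_succ, Nat.ascFactorial_succ]
    exact Nat.mul_le_mul (by omega) (ih h)

private lemma ascFact_strict_mono {p r d : ℕ} (hp : 0 < p) (hpr : p < r) (hd : 0 < d) :
    Nat.ascFactorial p d < Nat.ascFactorial r d := by
  obtain ⟨k, rfl⟩ : ∃ k, d = k + 1 := ⟨d - 1, by omega⟩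
  rw [Nat.ascFactorial_succ, Nat.ascFactorial_succ]
  have h1 : Nat.ascFactorial p k ≤ Nat.ascFactorial r k := ascFact_mono k (le_of_lt hpr)
  have h2 : 0 < Nat.ascFactorial r k := by
    obtain ⟨m, rfl⟩ : ∃ m, r = m + 1 := ⟨r - 1, by omega⟩
    exact Nat.ascFactorial_pos m k
  calc (p + k) * Nat.ascFactorial p k ≤ (p + k) * Nat.ascFactorial r k :=
        Nat.mul_le_mul_left _ h1
    _ < (r + k) * Nat.ascFactorial r k := Nat.mul_lt_mul_of_lt_of_le (by omega) le_rfl h2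

private lemma fact_ineq {p r d : ℕ} (hpr : p < r) (hd : 0 < d) :
    (p + d).factorial * r.factorial < p.factorial * (r + d).factorial := by
  have e1 : p.factorial * Nat.ascFactorial (p + 1) d = (p + d).factorial :=
    Nat.factorial_mul_ascFactorial p d
  have e2 : r.factorial * Nat.ascFactorial (r + 1) d = (r + d).factorial :=
    Nat.factorial_mul_ascFactorial r d
  rw [← e1, ← e2]
  have h := ascFact_strict_mono (p := p + 1) (r := r + 1) (by omega) (by omega) hd
  calc p.factorial * Nat.ascFactorial (p + 1) d * r.factorial
      = (p.factorial * r.factorial) * Nat.ascFactorial (p + 1) d := by ring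
    _ < (p.factorial * r.factorial) * Nat.ascFactorial (r + 1) d :=
        Nat.mul_lt_mul_of_pos_left h (Nat.mul_pos p.factorial_pos r.factorial_pos)
    _ = p.factorial * (r.factorial * Nat.ascFactorial (r + 1) d) := by ring

private lemma choose_tp2_core {a a' b b' : ℕ} (ha : 0 < a) (ha' : 0 < a')
    (haa : a < a') (hbb : b < b') :
    (a' + b - 1).choose (a' - 1) * (a + b' - 1).choose (a - 1) <
    (a + b - 1).choose (a - 1) * (a' + b' - 1).choose (a' - 1) := by
  obtain ⟨x, rfl⟩ : ∃ x, a = x + 1 := ⟨a - 1, by omega⟩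
  obtain ⟨y, rfl⟩ : ∃ y, a' = y + 1 := ⟨a' - 1, by omega⟩
  simp only [Nat.add_sub_cancel] at *
  have hxy : x < y := by omega
  have hs1 : x + 1 + b - 1 = x + b := by omega
  have hs2 : y + 1 + b - 1 = y + b := by omega
  have hs3 : x + 1 + b' - 1 = x + b' := by omega
  have hs4 : y + 1 + b' - 1 = y + b' := by omega
  rw [hs1, hs2, hs3, hs4]
  have E : ∀ u v : ℕ, (u + v).choose u * u.factorial * v.factorial = (u + v).factorial := by
    intro u v
    have := Nat.choose_mul_factorial_mul_factorial (n := u + v) (k := u) (by omega)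
    simpa using this
  have key : (x + b').factorial * (y + b).factorial <
      (x + b).factorial * (y + b').factorial := by
    have := fact_ineq (p := x + b) (r := y + b) (d := b' - b) (by omega) (by omega)
    have h1 : x + b + (b' - b) = x + b' := by omega
    have h2 : y + b + (b' - b) = y + b' := by omega
    rwa [h1, h2] at this
  have D : 0 < x.factorial * y.factorial * b.factorial * b'.factorial :=
    Nat.mul_pos (Nat.mul_pos (Nat.mul_pos x.factorial_pos y.factorial_pos)
      b.factorial_pos) b'.factorial_pos
  refine Nat.lt_of_mul_lt_mul_right
    (a := (x.factorial * y.factorial * b.factorial * b'.factorial)) ?_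
  calc (y + b).choose y * (x + b').choose x *
        (x.factorial * y.factorial * b.factorial * b'.factorial)
      = ((y + b).choose y * y.factorial * b.factorial) *
        ((x + b').choose x * x.factorial * b'.factorial) := by ring
    _ = (y + b).factorial * (x + b').factorial := by rw [E y b, E x b']
    _ < (x + b).factorial * (y + b').factorial := by
        calc (y + b).factorial * (x + b').factorial
            = (x + b').factorial * (y + b).factorial := by ring
          _ < (x + b).factorial * (y + b').factorial := key
    _ = ((x + b).choose x * x.factorial * b.factorial) *
        ((y + b').choose y * y.factorial * b'.factorial) := by rw [E x b, E y b']
    _ = (x + b).choose x * (y + b').choose y *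
        (x.factorial * y.factorial * b.factorial * b'.factorial) := by ring

/-- Strict total positivity of order 2 of `(a,b) ↦ C(a+b-1, a-1)`: for positive integers
`a ≠ a'`, `b ≠ b'`, the divided difference
`(C(a+b-1,a-1)·C(a'+b'-1,a'-1) − C(a'+b-1,a'-1)·C(a+b'-1,a-1)) / ((a'-a)(b'-b))`
is strictly positive. -/
theorem choose_tp2_divided_difference_pos (a a' b b' : ℕ)
    (ha : 0 < a) (ha' : 0 < a') (hb : 0 < b) (hb' : 0 < b')
    (hna : a ≠ a') (hnb : b ≠ b') :
    0 < ((((a + b - 1).choose (a - 1) * (a' + b' - 1).choose (a' - 1) : ℕ) : ℚ) -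
          (((a' + b - 1).choose (a' - 1) * (a + b' - 1).choose (a - 1) : ℕ) : ℚ)) /
        (((a' : ℚ) - (a : ℚ)) * ((b' : ℚ) - (b : ℚ))) := by
  rcases lt_or_gt_of_ne hna with haa | haa <;> rcases lt_or_gt_of_ne hnb with hbb | hbb
  · -- a < a', b < b' : num > 0, denom > 0
    have h := choose_tp2_core ha ha' haa hbb
    apply div_pos
    · have : ((a' + b - 1).choose (a' - 1) * (a + b' - 1).choose (a - 1) : ℚ) <
          ((a + b - 1).choose (a - 1) * (a' + b' - 1).choose (a' - 1) : ℚ) := by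
        exact_mod_cast h
      push_cast
      push_cast at this
      linarith
    · have h1 : (a : ℚ) < a' := by exact_mod_cast haa
      have h2 : (b : ℚ) < b' := by exact_mod_cast hbb
      nlinarith
  · -- a < a', b' < b : num < 0, denom < 0
    have h := choose_tp2_core ha ha' haa hbb
    apply div_pos_of_neg_of_neg
    · have : ((a' + b' - 1).choose (a' - 1) * (a + b - 1).choose (a - 1) : ℚ) <
          ((a + b' - 1).choose (a - 1) * (a' + b - 1).choose (a' - 1) : ℚ) := by
        exact_mod_cast h
      push_cast
      push_cast at this
      linarith
    · have h1 : (a : ℚ) < a' := by exact_mod_cast haa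
      have h2 : (b' : ℚ) < b := by exact_mod_cast hbb
      nlinarith
  · -- a' < a, b < b' : num < 0, denom < 0
    have h := choose_tp2_core ha' ha haa hbb
    apply div_pos_of_neg_of_neg
    · have : ((a + b - 1).choose (a - 1) * (a' + b' - 1).choose (a' - 1) : ℚ) <
          ((a' + b - 1).choose (a' - 1) * (a + b' - 1).choose (a - 1) : ℚ) := by
        exact_mod_cast h
      push_cast
      push_cast at this
      linarith
    · have h1 : (a' : ℚ) < a := by exact_mod_cast haa
      have h2 : (b : ℚ) < b' := by exact_mod_cast hbb
      nlinarith
  · -- a' < a, b' < b : num > 0, denom > 0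
    have h := choose_tp2_core ha' ha haa hbb
    apply div_pos
    · have : ((a + b' - 1).choose (a - 1) * (a' + b - 1).choose (a' - 1) : ℚ) <
          ((a' + b' - 1).choose (a' - 1) * (a + b - 1).choose (a - 1) : ℚ) := by
        exact_mod_cast h
      push_cast
      push_cast at this
      linarith
    · have h1 : (a' : ℚ) < a := by exact_mod_cast haa
      have h2 : (b' : ℚ) < b := by exact_mod_cast hbb
      nlinarith
end
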